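/- Under the assumptions of Lemma 1 with v = (1,0,…,0): if unit vectors u → v and t → ∞, then P(uᵀX₁ ≥ tr)/P(X_{1,1} ≥ tr) → 1 for each fixed r > 0, where X_{1,1} is the first coordinate of X₁. -/

import Mathlib

open MeasureTheory Filter
open scoped RealInnerProductSpace Pointwise

private lemma smul_halfspace' {d : ℕ} (w : EuclideanSpace ℝ (Fin d)) (a t : ℝ) (ht : 0 < t) :
    t • {x : EuclideanSpace ℝ (Fin d) | a ≤ ⟪w, x⟫} = {x | t * a ≤ ⟪w, x⟫} := by
  ext x
  rw [Set.mem_smul_set_iff_inv_smul_mem₀ ht.ne']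
  simp only [Set.mem_setOf_eq, real_inner_smul_right]
  rw [inv_mul_eq_div, le_div_iff₀ ht, mul_comm]

private lemma smul_eqspace' {d : ℕ} (w : EuclideanSpace ℝ (Fin d)) (a t : ℝ) (ht : 0 < t) :
    t • {x : EuclideanSpace ℝ (Fin d) | ⟪w, x⟫ = a} = {x | ⟪w, x⟫ = t * a} := by
  ext x
  rw [Set.mem_smul_set_iff_inv_smul_mem₀ ht.ne']
  simp only [Set.mem_setOf_eq, real_inner_smul_right]
  rw [inv_mul_eq_div, div_eq_iff ht.ne', mul_comm]


private lemma ratio_arith (A B D L ε ε' : ℝ) (hD : 0 < D) (Lpos : 0 < L)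
    (hε'pos : 0 < ε') (hε'13 : ε' ≤ 1/3) (hε'ε : 3 * ε' ≤ ε)
    (haup : A / D < (1 + ε') * L) (halo : (1 - ε') * L < A / D)
    (hQ1 : B / D < (1 + ε') * L) (hQ2 : (1 - ε') * L < B / D) :
    |A / B - 1| < ε := by
  have hab : A / B = (A / D) / (B / D) := by
    rw [div_div_div_comm, div_self hD.ne', div_one]
  have hbpos : 0 < B / D :=
    lt_trans (by nlinarith [mul_pos hε'pos Lpos] : (0:ℝ) < (1 - ε') * L) hQ2
  rw [abs_sub_lt_iff]
  constructor
  · rw [hab, sub_lt_iff_lt_add, div_lt_iff₀ hbpos]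
    have h1 : (1 + ε') * L ≤ (3 * ε' + 1) * ((1 - ε') * L) := by nlinarith [Lpos, hε'pos, hε'13]
    have h2 : (3 * ε' + 1) * ((1 - ε') * L) < (3 * ε' + 1) * (B / D) := by
      have := mul_lt_mul_of_pos_left hQ2 (by linarith : (0:ℝ) < 3 * ε' + 1)
      linarith
    have h3 : (3 * ε' + 1) * (B / D) ≤ (ε + 1) * (B / D) := by nlinarith [hbpos, hε'ε]
    linarith [haup]
  · rw [sub_lt_comm, hab, lt_div_iff₀ hbpos]
    have k1 : (1 - ε) * (B / D) ≤ (1 - 3 * ε') * (B / D) := by nlinarith [hbpos, hε'ε]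
    have k2 : (1 - 3 * ε') * (B / D) ≤ (1 - 3 * ε') * ((1 + ε') * L) := by
      have := mul_le_mul_of_nonneg_left hQ1.le (by linarith : (0:ℝ) ≤ 1 - 3 * ε')
      linarith
    have k3 : (1 - 3 * ε') * ((1 + ε') * L) < (1 - ε') * L := by
      nlinarith [mul_pos hε'pos Lpos, mul_pos (mul_pos hε'pos hε'pos) Lpos]
    linarith [halo]

set_option maxHeartbeats 1000000 in
theorem projection_tail_ratio_to_one {d : ℕ} (hd : 0 < d) {Ω : Type*} [MeasurableSpace Ω]
    (μ : Measure Ω) [IsProbabilityMeasure μ]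
    (X : Ω → EuclideanSpace ℝ (Fin d)) (hX : Measurable X)
    (α c : ℝ) (hα : 0 < α) (hc : 0 < c) (ν : Measure (EuclideanSpace ℝ (Fin d)))
    (hom : ∀ a : ℝ, 0 < a → ∀ B : Set (EuclideanSpace ℝ (Fin d)), MeasurableSet B →
      (∃ ε > 0, ∀ x ∈ B, ε ≤ ‖x‖) → ν (a • B) = ENNReal.ofReal (a ^ (-α)) * ν B)
    (hconv : ∀ B : Set (EuclideanSpace ℝ (Fin d)), MeasurableSet B →
      (∃ ε > 0, ∀ x ∈ B, ε ≤ ‖x‖) → ν (frontier B) = 0 → ν B ≠ ⊤ →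
      Tendsto (fun t : ℝ =>
          (μ {ω | X ω ∈ t • B}).toReal / (μ {ω | t ≤ ‖X ω‖}).toReal)
        atTop (nhds (ν B).toReal))
    (hnorm : Tendsto (fun t : ℝ => (μ {ω | t < ‖X ω‖}).toReal / t ^ (-α))
      atTop (nhds c))
    (v : EuclideanSpace ℝ (Fin d)) (hv : v = EuclideanSpace.single ⟨0, hd⟩ (1 : ℝ))
    (hfinv : ν {x | 1 ≤ ⟪v, x⟫} ≠ ⊤) (hposv : 0 < ν {x | 1 ≤ ⟪v, x⟫})
    (r : ℝ) (hr : 0 < r)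
    (U : ℕ → EuclideanSpace ℝ (Fin d)) (hU : ∀ m, ‖U m‖ = 1)
    (hUv : Tendsto U atTop (nhds v))
    (T : ℕ → ℝ) (hT : Tendsto T atTop atTop) :
    Tendsto (fun m : ℕ =>
        (μ {ω | T m * r ≤ ⟪U m, X ω⟫}).toReal
          / (μ {ω | T m * r ≤ X ω ⟨0, hd⟩}).toReal)
      atTop (nhds 1) := by
  -- basic facts about v
  have hvx : ∀ x : EuclideanSpace ℝ (Fin d), ⟪v, x⟫ = x ⟨0, hd⟩ := by
    intro x
    rw [hv]
    simpa using EuclideanSpace.inner_single_left (𝕜 := ℝ) ⟨0, hd⟩ 1 x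
  have hvn : ‖v‖ = 1 := by rw [hv, EuclideanSpace.norm_single]; norm_num
  have hinner_le : ∀ x : EuclideanSpace ℝ (Fin d), ⟪v, x⟫ ≤ ‖x‖ := by
    intro x
    calc ⟪v, x⟫ ≤ ‖v‖ * ‖x‖ := real_inner_le_norm v x
    _ = ‖x‖ := by rw [hvn, one_mul]
  set H : ℝ → Set (EuclideanSpace ℝ (Fin d)) := fun a => {x | a ≤ ⟪v, x⟫} with hHdef
  have hinnercont : Continuous fun x : EuclideanSpace ℝ (Fin d) => ⟪v, x⟫ :=
    continuous_const.inner continuous_id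
  have Hmeas : ∀ a : ℝ, MeasurableSet (H a) := fun a =>
    (isClosed_le continuous_const hinnercont).measurableSet
  have Hbdd : ∀ a : ℝ, 0 < a → ∃ ε > 0, ∀ x ∈ H a, ε ≤ ‖x‖ := by
    intro a ha
    exact ⟨a, ha, fun x hx => le_trans hx (hinner_le x)⟩
  have Hsmul : ∀ t a : ℝ, 0 < t → t • H a = H (t * a) := fun t a ht => smul_halfspace' v a t ht
  have hνH : ∀ a : ℝ, 0 < a → ν (H a) = ENNReal.ofReal (a ^ (-α)) * ν (H 1) := by
    intro a ha
    have h1 := hom a ha (H 1) (Hmeas 1) (Hbdd 1 one_pos)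
    rwa [Hsmul a 1 ha, mul_one] at h1
  have hfin : ∀ a : ℝ, 0 < a → ν (H a) ≠ ⊤ := by
    intro a ha
    rw [hνH a ha]
    exact ENNReal.mul_ne_top ENNReal.ofReal_ne_top hfinv
  set L : ℝ := (ν (H 1)).toReal with hLdef
  have Lpos : 0 < L := ENNReal.toReal_pos hposv.ne' hfinv
  have hνHr : ∀ a : ℝ, 0 < a → (ν (H a)).toReal = a ^ (-α) * L := by
    intro a ha
    rw [hνH a ha, ENNReal.toReal_mul, ENNReal.toReal_ofReal (Real.rpow_nonneg ha.le _)]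
  -- the level set {⟪v,x⟫ = 1} is ν-null
  have Eq0 : ν {x : EuclideanSpace ℝ (Fin d) | ⟪v, x⟫ = 1} = 0 := by
    set F := ν {x : EuclideanSpace ℝ (Fin d) | ⟪v, x⟫ = 1} with hF
    have hsubH1 : {x : EuclideanSpace ℝ (Fin d) | ⟪v, x⟫ = 1} ⊆ H 1 := by
      intro x hx
      simp only [Set.mem_setOf_eq] at hx ⊢
      exact hx.ge
    have hFfin : F ≠ ⊤ := ne_top_of_le_ne_top hfinv (measure_mono hsubH1)
    have key : ∀ n : ℕ, (1 + ((n : ℝ) + 1)⁻¹) ^ (-α) * L + F.toReal ≤ L := by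
      intro n
      set δ : ℝ := ((n : ℝ) + 1)⁻¹ with hδdef
      have hδ : (0 : ℝ) < δ := by positivity
      have hdisj : Disjoint (H (1 + δ)) {x : EuclideanSpace ℝ (Fin d) | ⟪v, x⟫ = 1} := by
        rw [Set.disjoint_left]
        intro x hx1 hx2
        simp only [hHdef, Set.mem_setOf_eq] at hx1
        simp only [Set.mem_setOf_eq] at hx2
        rw [hx2] at hx1
        linarith
      have hunion : ν (H (1 + δ)) + F ≤ ν (H 1) := by
        rw [← measure_union hdisj ((isClosed_eq hinnercont continuous_const).measurableSet)]
        refine measure_mono ?_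
        rintro x (hx | hx)
        · simp only [hHdef, Set.mem_setOf_eq] at hx ⊢; linarith
        · exact hsubH1 hx
      have htr := ENNReal.toReal_mono hfinv hunion
      rw [ENNReal.toReal_add (hfin _ (by linarith)) hFfin] at htr
      rw [← hνHr (1 + δ) (by linarith)]
      exact htr
    have hlim : Tendsto (fun n : ℕ => L - (1 + ((n : ℝ) + 1)⁻¹) ^ (-α) * L) atTop (nhds 0) := by
      have h1 : Tendsto (fun n : ℕ => 1 + ((n : ℝ) + 1)⁻¹) atTop (nhds 1) := by
        have h0 : Tendsto (fun n : ℕ => ((n : ℝ) + 1)⁻¹) atTop (nhds 0) :=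
          tendsto_one_div_add_atTop_nhds_zero_nat.congr (fun n => by rw [one_div])
        simpa using tendsto_const_nhds.add h0
      have hca : ContinuousAt (fun x : ℝ => x ^ (-α)) 1 :=
        Real.continuousAt_rpow_const 1 (-α) (Or.inl one_ne_zero)
      have h2 : Tendsto (fun n : ℕ => (1 + ((n : ℝ) + 1)⁻¹) ^ (-α)) atTop (nhds 1) := by
        have := hca.tendsto.comp h1
        simpa [Function.comp_def, Real.one_rpow] using this
      have h3 : Tendsto (fun n : ℕ => L - (1 + ((n : ℝ) + 1)⁻¹) ^ (-α) * L) atTop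
          (nhds (L - 1 * L)) := Tendsto.sub tendsto_const_nhds (h2.mul_const L)
      simpa using h3
    have hle : F.toReal ≤ 0 := by
      refine ge_of_tendsto' hlim (fun n => ?_)
      have := key n
      linarith
    have : F.toReal = 0 := le_antisymm hle ENNReal.toReal_nonneg
    rcases (ENNReal.toReal_eq_zero_iff F).mp this with h | h
    · exact h
    · exact absurd h hFfin
  -- frontiers are null
  have hfr : ∀ a : ℝ, 0 < a → ν (frontier (H a)) = 0 := by
    intro a ha
    refine measure_mono_null (frontier_le_subset_eq continuous_const hinnercont) ?_
    have he : {x : EuclideanSpace ℝ (Fin d) | a = ⟪v, x⟫}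
        = a • {x : EuclideanSpace ℝ (Fin d) | ⟪v, x⟫ = 1} := by
      rw [smul_eqspace' v 1 a ha, mul_one]
      ext x; simp [eq_comm]
    rw [he, hom a ha _ ((isClosed_eq hinnercont continuous_const).measurableSet)
      ⟨1, one_pos, fun x hx => by
        simp only [Set.mem_setOf_eq] at hx; rw [← hx]; exact hinner_le x⟩, Eq0, mul_zero]
  -- the time sequence
  have htt : Tendsto (fun m => T m * r) atTop atTop := hT.atTop_mul_const hr
  have hEpos : ∀ᶠ m in atTop, 0 < T m * r := htt.eventually_gt_atTop 0
  -- halfspace convergence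
  have halfT : ∀ a : ℝ, 0 < a →
      Tendsto (fun m => (μ {ω | T m * r * a ≤ ⟪v, X ω⟫}).toReal
        / (μ {ω | T m * r ≤ ‖X ω‖}).toReal) atTop (nhds (a ^ (-α) * L)) := by
    intro a ha
    have hcv := (hconv (H a) (Hmeas a) (Hbdd a ha) (hfr a ha) (hfin a ha)).comp htt
    rw [hνHr a ha] at hcv
    refine hcv.congr' ?_
    filter_upwards [hEpos] with m hm
    simp only [Function.comp_apply]
    congr 2
    rw [Hsmul _ a hm]
    rfl
  -- tail of the norm
  set g : ℝ → ℝ := fun b => (μ {ω | b < ‖X ω‖}).toReal with hg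
  have hgpos : ∀ᶠ m in atTop, 0 < g (T m * r) := by
    have h2 : Tendsto (fun m => g (T m * r) / (T m * r) ^ (-α)) atTop (nhds c) := hnorm.comp htt
    filter_upwards [h2.eventually_const_lt (half_lt_self hc), hEpos] with m h1 h0
    have hq : (0 : ℝ) < (T m * r) ^ (-α) := Real.rpow_pos_of_pos h0 _
    have hdiv : 0 < g (T m * r) / (T m * r) ^ (-α) := lt_trans (half_pos hc) h1
    have := mul_pos hdiv hq
    rwa [div_mul_cancel₀ _ hq.ne'] at this
  have hNrat : ∀ K : ℝ, 0 < K →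
      Tendsto (fun m => g (T m * r * K) / g (T m * r)) atTop (nhds (K ^ (-α))) := by
    intro K hK
    have h1 : Tendsto (fun m => g (T m * r * K) / (T m * r * K) ^ (-α)) atTop (nhds c) :=
      hnorm.comp (htt.atTop_mul_const hK)
    have h2 : Tendsto (fun m => g (T m * r) / (T m * r) ^ (-α)) atTop (nhds c) := hnorm.comp htt
    have h3 := (h1.div h2 hc.ne').mul_const (K ^ (-α))
    rw [div_self hc.ne', one_mul] at h3
    refine h3.congr' ?_
    filter_upwards [hEpos, hgpos] with m hm hgm
    simp only [Pi.div_apply]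
    have hq : ((T m * r) : ℝ) ^ (-α) ≠ 0 := (Real.rpow_pos_of_pos hm _).ne'
    have hK0 : (K : ℝ) ^ (-α) ≠ 0 := (Real.rpow_pos_of_pos hK _).ne'
    have hp : ((T m * r * K) : ℝ) ^ (-α) = (T m * r) ^ (-α) * K ^ (-α) :=
      Real.mul_rpow hm.le hK.le
    rw [hp]
    field_simp
  -- denominator convergence
  have hBt : Tendsto (fun m => (μ {ω | T m * r ≤ X ω ⟨0, hd⟩}).toReal
      / (μ {ω | T m * r ≤ ‖X ω‖}).toReal) atTop (nhds L) := by
    have h1 := halfT 1 one_pos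
    rw [Real.one_rpow, one_mul] at h1
    refine h1.congr (fun m => ?_)
    have hset : {ω | T m * r * 1 ≤ ⟪v, X ω⟫} = {ω | T m * r ≤ X ω ⟨0, hd⟩} := by
      ext ω
      simp only [Set.mem_setOf_eq, mul_one, hvx]
    rw [hset]
  -- norm convergence of U to v
  have hUn : Tendsto (fun m => ‖U m - v‖) atTop (nhds 0) :=
    tendsto_iff_norm_sub_tendsto_zero.mp hUv
  -- main ε-argument
  rw [Metric.tendsto_nhds]
  intro ε hε
  set ε' : ℝ := min ε 1 / 3 with hε'def
  have hε'pos : 0 < ε' := by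
    have := lt_min hε one_pos
    positivity
  have hε'ε : 3 * ε' ≤ ε := by
    have := min_le_left ε 1
    rw [hε'def]; linarith
  have hε'13 : ε' ≤ 1 / 3 := by
    have := min_le_right ε 1
    rw [hε'def]; linarith
  -- choose s
  have hca : ContinuousAt (fun x : ℝ => x ^ (-α)) 1 :=
    Real.continuousAt_rpow_const 1 (-α) (Or.inl one_ne_zero)
  have hrpow1 : Tendsto (fun s : ℝ => (1 - s) ^ (-α)) (nhds 0) (nhds 1) := by
    have h1 : Tendsto (fun s : ℝ => 1 - s) (nhds 0) (nhds 1) := by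
      simpa [Pi.sub_def] using (continuous_const.sub continuous_id).tendsto (0 : ℝ)
    simpa [Function.comp_def, Real.one_rpow] using hca.tendsto.comp h1
  have hrpow2 : Tendsto (fun s : ℝ => (1 + s) ^ (-α)) (nhds 0) (nhds 1) := by
    have h1 : Tendsto (fun s : ℝ => 1 + s) (nhds 0) (nhds 1) := by
      simpa [Pi.add_def] using (continuous_const.add continuous_id).tendsto (0 : ℝ)
    simpa [Function.comp_def, Real.one_rpow] using hca.tendsto.comp h1
  have hev : ∀ᶠ s : ℝ in nhds 0, (1 - s) ^ (-α) < 1 + ε' / 2 ∧ 1 - ε' / 2 < (1 + s) ^ (-α) :=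
    (hrpow1.eventually_lt_const (by linarith)).and (hrpow2.eventually_const_lt (by linarith))
  obtain ⟨δ, hδpos, hδ⟩ := Metric.eventually_nhds_iff.mp hev
  set s : ℝ := min (δ / 2) 2⁻¹ with hsdef
  have hspos : 0 < s := lt_min (by linarith) (by norm_num)
  have hs1 : s < 1 := lt_of_le_of_lt (min_le_right _ _) (by norm_num)
  obtain ⟨hs_up, hs_lo⟩ : (1 - s) ^ (-α) < 1 + ε' / 2 ∧ 1 - ε' / 2 < (1 + s) ^ (-α) := by
    refine hδ ?_
    rw [Real.dist_eq, sub_zero, abs_of_pos hspos]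
    exact lt_of_le_of_lt (min_le_left _ _) (by linarith)
  -- choose K
  have hKt : Tendsto (fun K : ℝ => (K / 2) ^ (-α)) atTop (nhds 0) := by
    refine (tendsto_rpow_neg_atTop hα).comp ?_
    exact tendsto_id.atTop_div_const (by norm_num)
  obtain ⟨K, hKb, hK1⟩ :=
    ((hKt.eventually_lt_const (by positivity : (0:ℝ) < ε' / 2 * L)).and
      (eventually_ge_atTop (1 : ℝ))).exists
  have hKpos : (0 : ℝ) < K := lt_of_lt_of_le one_pos hK1
  have hK2pos : (0 : ℝ) < K / 2 := by linarith
  -- sequence limits for fixed s, K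
  have hU1 := halfT (1 - s) (by linarith)
  have hL1 := halfT (1 + s) (by linarith)
  have hN := hNrat (K / 2) hK2pos
  -- eventual numeric bounds
  have EvA : ∀ᶠ m in atTop,
      (μ {ω | T m * r * (1 - s) ≤ ⟪v, X ω⟫}).toReal / (μ {ω | T m * r ≤ ‖X ω‖}).toReal
        + g (T m * r * (K / 2)) / g (T m * r) < (1 + ε') * L := by
    refine (hU1.add hN).eventually_lt_const ?_
    have := mul_lt_mul_of_pos_right hs_up Lpos
    linarith
  have EvB : ∀ᶠ m in atTop,
      (1 - ε') * L < (μ {ω | T m * r * (1 + s) ≤ ⟪v, X ω⟫}).toReal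
        / (μ {ω | T m * r ≤ ‖X ω‖}).toReal - g (T m * r * (K / 2)) / g (T m * r) := by
    refine (hL1.sub hN).eventually_const_lt ?_
    have := mul_lt_mul_of_pos_right hs_lo Lpos
    linarith
  have EvQ1 : ∀ᶠ m in atTop,
      (μ {ω | T m * r ≤ X ω ⟨0, hd⟩}).toReal / (μ {ω | T m * r ≤ ‖X ω‖}).toReal
        < (1 + ε') * L := hBt.eventually_lt_const (by nlinarith [mul_pos hε'pos Lpos])
  have EvQ2 : ∀ᶠ m in atTop,
      (1 - ε') * L < (μ {ω | T m * r ≤ X ω ⟨0, hd⟩}).toReal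
        / (μ {ω | T m * r ≤ ‖X ω‖}).toReal := hBt.eventually_const_lt (by nlinarith [mul_pos hε'pos Lpos])
  have EvU : ∀ᶠ m in atTop, ‖U m - v‖ < s / K := hUn.eventually_lt_const (by positivity)
  filter_upwards [EvA, EvB, EvQ1, EvQ2, EvU, hEpos, hgpos] with m hA hBlo hQ1 hQ2 hUm h0 hgm
  set t : ℝ := T m * r with htdef
  set D : ℝ := (μ {ω | t ≤ ‖X ω‖}).toReal with hD
  set A : ℝ := (μ {ω | t ≤ ⟪U m, X ω⟫}).toReal with hA2
  set B : ℝ := (μ {ω | t ≤ X ω ⟨0, hd⟩}).toReal with hB2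
  set Bu : ℝ := (μ {ω | t * (1 - s) ≤ ⟪v, X ω⟫}).toReal with hBu
  set Bl : ℝ := (μ {ω | t * (1 + s) ≤ ⟪v, X ω⟫}).toReal with hBl
  have hNs : g (t * (K / 2)) = (μ {ω | t * (K / 2) < ‖X ω‖}).toReal := rfl
  have hgD : g t ≤ D := by
    refine ENNReal.toReal_mono (measure_ne_top μ _) (measure_mono ?_)
    intro ω hω
    simp only [Set.mem_setOf_eq] at hω ⊢
    exact hω.le
  have hDpos : 0 < D := lt_of_lt_of_le hgm hgD
  -- key bound on inner products
  have hKne : (K : ℝ) ≠ 0 := hKpos.ne'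
  have hbound : ∀ ω, ¬ (t * (K / 2) < ‖X ω‖) → |⟪U m - v, X ω⟫| ≤ s * t / 2 := by
    intro ω hω
    push_neg at hω
    have h1 : |⟪U m - v, X ω⟫| ≤ ‖U m - v‖ * ‖X ω‖ := abs_real_inner_le_norm _ _
    have h2 : ‖U m - v‖ * ‖X ω‖ ≤ (s / K) * (t * (K / 2)) := by
      refine mul_le_mul hUm.le hω (norm_nonneg _) ?_
      positivity
    have h3 : (s / K) * (t * (K / 2)) = s * t / 2 := by field_simp
    linarith
  -- inclusion 1
  have hinc1 : {ω | t ≤ ⟪U m, X ω⟫}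
      ⊆ {ω | t * (1 - s) ≤ ⟪v, X ω⟫} ∪ {ω | t * (K / 2) < ‖X ω‖} := by
    intro ω hω
    simp only [Set.mem_setOf_eq] at hω
    by_cases hx : t * (K / 2) < ‖X ω‖
    · exact Or.inr hx
    · left
      have hb := hbound ω hx
      have he : ⟪v, X ω⟫ = ⟪U m, X ω⟫ - ⟪U m - v, X ω⟫ := by
        rw [inner_sub_left]; ring
      have hle : ⟪U m - v, X ω⟫ ≤ |⟪U m - v, X ω⟫| := le_abs_self _
      simp only [Set.mem_setOf_eq]
      nlinarith [mul_nonneg hspos.le h0.le]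
  -- inclusion 2
  have hinc2 : {ω | t * (1 + s) ≤ ⟪v, X ω⟫}
      ⊆ {ω | t ≤ ⟪U m, X ω⟫} ∪ {ω | t * (K / 2) < ‖X ω‖} := by
    intro ω hω
    simp only [Set.mem_setOf_eq] at hω
    by_cases hx : t * (K / 2) < ‖X ω‖
    · exact Or.inr hx
    · left
      have hb := hbound ω hx
      have he : ⟪U m, X ω⟫ = ⟪v, X ω⟫ + ⟪U m - v, X ω⟫ := by
        rw [inner_sub_left]; ring
      have habs : -|⟪U m - v, X ω⟫| ≤ ⟪U m - v, X ω⟫ := neg_abs_le _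
      simp only [Set.mem_setOf_eq]
      nlinarith [mul_nonneg hspos.le h0.le]
  -- measure inequalities
  have hsubadd : ∀ (S S1 S2 : Set Ω), S ⊆ S1 ∪ S2 →
      (μ S).toReal ≤ (μ S1).toReal + (μ S2).toReal := by
    intro S S1 S2 hsub
    rw [← ENNReal.toReal_add (measure_ne_top μ _) (measure_ne_top μ _)]
    exact ENNReal.toReal_mono (ENNReal.add_ne_top.2 ⟨measure_ne_top μ _, measure_ne_top μ _⟩)
      ((measure_mono hsub).trans (measure_union_le _ _))
  have hineq1 : A ≤ Bu + g (t * (K / 2)) := hsubadd _ _ _ hinc1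
  have hineq2 : Bl ≤ A + g (t * (K / 2)) := hsubadd _ _ _ hinc2
  have hNsD : g (t * (K / 2)) / D ≤ g (t * (K / 2)) / g t := by
    gcongr
  have haup : A / D < (1 + ε') * L := by
    calc A / D ≤ (Bu + g (t * (K / 2))) / D := by gcongr
    _ = Bu / D + g (t * (K / 2)) / D := add_div _ _ _
    _ ≤ Bu / D + g (t * (K / 2)) / g t := by linarith
    _ < (1 + ε') * L := hA
  have halo : (1 - ε') * L < A / D := by
    have h1 : Bl / D ≤ (A + g (t * (K / 2))) / D := by gcongr
    rw [add_div] at h1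
    have h2 : Bl / D - g (t * (K / 2)) / g t ≤ A / D := by linarith
    linarith
  -- final ratio bound
  rw [Real.dist_eq]
  exact ratio_arith A B D L ε ε' hDpos Lpos hε'pos hε'13 hε'ε haup halo hQ1 hQ2
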